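/- Assume: (i) for every a ∈ (0,1] there exist an N-node strategy ν_a with PA_N(ν_a) ≥ a and MSE_N(ν_a) = c_η^N(a), and a 2-node strategy κ_a with PA_2(κ_a) ≥ a and MSE_2(κ_a) = c_η^2(a); (ii) best responses exist in both the N-node and 2-node games. Then the sets of equilibrium performance pairs coincide: { (MSE_N(ν), PA_N(ν)) : ν a best response among N-node strategies } = { (MSE_2(κ), PA_2(κ)) : κ a best response among 2-node strategies }. -/

import Mathlib

open MeasureTheory ProbabilityTheory

noncomputable section

def midN (N : ℕ) (p : ℝ × (Fin (N-1) → ℝ)) : ℝ :=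
  (max p.1 (⨆ i, p.2 i) + min p.1 (⨅ i, p.2 i)) / 2

def accN (N : ℕ) (η Δ : ℝ) : Set (ℝ × (Fin (N-1) → ℝ)) :=
  {p | max p.1 (⨆ i, p.2 i) - min p.1 (⨅ i, p.2 i) ≤ η * Δ}

def PA_N (N : ℕ) (η Δ : ℝ) (μ : Measure ℝ) (ν : Measure (Fin (N-1) → ℝ)) : ℝ :=
  ((μ.prod ν) (accN N η Δ)).toReal

def MSE_N (N : ℕ) (η Δ : ℝ) (μ : Measure ℝ) (ν : Measure (Fin (N-1) → ℝ)) : ℝ :=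
  ∫ p, (midN N p) ^ 2 ∂((μ.prod ν)[|accN N η Δ])

def mid2 (p : ℝ × ℝ) : ℝ := (max p.1 p.2 + min p.1 p.2) / 2

def acc2 (η Δ : ℝ) : Set (ℝ × ℝ) := {p | max p.1 p.2 - min p.1 p.2 ≤ η * Δ}

def PA_2 (η Δ : ℝ) (μ κ : Measure ℝ) : ℝ := ((μ.prod κ) (acc2 η Δ)).toReal

def MSE_2 (η Δ : ℝ) (μ κ : Measure ℝ) : ℝ :=
  ∫ p, (mid2 p) ^ 2 ∂((μ.prod κ)[|acc2 η Δ])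

def cN (N : ℕ) (η Δ : ℝ) (μ : Measure ℝ) (α : ℝ) : ℝ :=
  sSup {r | ∃ ν : Measure (Fin (N-1) → ℝ), IsProbabilityMeasure ν ∧
    α ≤ PA_N N η Δ μ ν ∧ r = MSE_N N η Δ μ ν}

def c2 (η Δ : ℝ) (μ : Measure ℝ) (α : ℝ) : ℝ :=
  sSup {r | ∃ κ : Measure ℝ, IsProbabilityMeasure κ ∧
    α ≤ PA_2 η Δ μ κ ∧ r = MSE_2 η Δ μ κ}

def IsBestResponseN (N : ℕ) (η Δ : ℝ) (μ : Measure ℝ) (QAD : ℝ → ℝ → ℝ)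
    (ν : Measure (Fin (N-1) → ℝ)) : Prop :=
  IsProbabilityMeasure ν ∧ 0 < PA_N N η Δ μ ν ∧
    ∀ ν' : Measure (Fin (N-1) → ℝ), IsProbabilityMeasure ν' → 0 < PA_N N η Δ μ ν' →
      QAD (MSE_N N η Δ μ ν') (PA_N N η Δ μ ν') ≤ QAD (MSE_N N η Δ μ ν) (PA_N N η Δ μ ν)

def IsBestResponse2 (η Δ : ℝ) (μ : Measure ℝ) (QAD : ℝ → ℝ → ℝ) (κ : Measure ℝ) : Prop :=
  IsProbabilityMeasure κ ∧ 0 < PA_2 η Δ μ κ ∧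
    ∀ κ' : Measure ℝ, IsProbabilityMeasure κ' → 0 < PA_2 η Δ μ κ' →
      QAD (MSE_2 η Δ μ κ') (PA_2 η Δ μ κ') ≤ QAD (MSE_2 η Δ μ κ) (PA_2 η Δ μ κ)

section Aux

variable {N : ℕ} {η Δ : ℝ}

lemma cond_map_comm {α β : Type*} [MeasurableSpace α] [MeasurableSpace β]
    (m : Measure α) {G : α → β} (hG : Measurable G) {S : Set β} (hS : MeasurableSet S) :
    (m.map G)[|S] = (m[|G ⁻¹' S]).map G := by
  rw [ProbabilityTheory.cond, ProbabilityTheory.cond, Measure.map_apply hG hS,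
    Measure.restrict_map hG hS, Measure.map_smul]

lemma measurable_sup' : Measurable (fun x : Fin (N-1) → ℝ => ⨆ i, x i) :=
  Measurable.iSup fun i => measurable_pi_apply i

lemma measurable_inf' : Measurable (fun x : Fin (N-1) → ℝ => ⨅ i, x i) :=
  Measurable.iInf fun i => measurable_pi_apply i

lemma measurable_midN : Measurable (midN N) := by
  unfold midN
  exact ((measurable_fst.max (measurable_sup'.comp measurable_snd)).add
    (measurable_fst.min (measurable_inf'.comp measurable_snd))).div_const 2

lemma measurableSet_accN : MeasurableSet (accN N η Δ) := by
  unfold accN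
  exact measurableSet_le
    ((measurable_fst.max (measurable_sup'.comp measurable_snd)).sub
      (measurable_fst.min (measurable_inf'.comp measurable_snd))) measurable_const

lemma measurable_mid2 : Measurable mid2 := by
  unfold mid2
  exact ((measurable_fst.max measurable_snd).add (measurable_fst.min measurable_snd)).div_const 2

lemma measurableSet_acc2 : MeasurableSet (acc2 η Δ) := by
  unfold acc2
  exact measurableSet_le
    ((measurable_fst.max measurable_snd).sub (measurable_fst.min measurable_snd)) measurable_const

/-- Diagonal embedding of a 2-node strategy into an N-node strategy. -/
lemma diag_transfer (hN : 2 ≤ N) (μ : Measure ℝ) [IsProbabilityMeasure μ]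
    (κ : Measure ℝ) [IsProbabilityMeasure κ] :
    ∃ ν : Measure (Fin (N-1) → ℝ), IsProbabilityMeasure ν ∧
      PA_N N η Δ μ ν = PA_2 η Δ μ κ ∧ MSE_N N η Δ μ ν = MSE_2 η Δ μ κ := by
  haveI : Nonempty (Fin (N-1)) := ⟨⟨0, by omega⟩⟩
  set c : ℝ → (Fin (N-1) → ℝ) := fun t _ => t with hcdef
  have hc : Measurable c := measurable_pi_lambda _ fun _ => measurable_id
  set G : ℝ × ℝ → ℝ × (Fin (N-1) → ℝ) := Prod.map id c with hGdef
  have hG : Measurable G := measurable_id.prodMap hc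
  have hprod : μ.prod (κ.map c) = (μ.prod κ).map G := by
    have := Measure.map_prod_map (f := id) (g := c) μ κ measurable_id hc
    rw [Measure.map_id] at this
    exact this
  have hpre : G ⁻¹' (accN N η Δ) = acc2 η Δ := by
    ext p
    simp only [accN, acc2, Set.mem_preimage, Set.mem_setOf_eq, hGdef, Prod.map, hcdef,
      ciSup_const, ciInf_const, id]
  refine ⟨κ.map c, Measure.isProbabilityMeasure_map hc.aemeasurable, ?_, ?_⟩
  · unfold PA_N PA_2
    rw [hprod, Measure.map_apply hG measurableSet_accN, hpre]
  · unfold MSE_N MSE_2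
    rw [hprod, cond_map_comm _ hG measurableSet_accN, hpre,
      integral_map hG.aemeasurable ((measurable_midN.pow_const 2).aestronglyMeasurable)]
    congr 1
    ext p
    simp only [midN, mid2, hGdef, Prod.map, hcdef, ciSup_const, ciInf_const, id]


lemma ptwise_acc {η Δ n M m' t : ℝ} (hΔ : 0 < Δ) (hη : 2 ≤ η)
    (hn1 : -Δ ≤ n) (hn2 : n ≤ Δ) (hmM : m' ≤ M)
    (ht : t = if M - m' ≤ η * Δ then (if 0 ≤ M + m' then M else m') else (η + 2) * Δ) :
    (max n M - min n m' ≤ η * Δ) ↔ (max n t - min n t ≤ η * Δ) := by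
  have h2Δ : 2 * Δ ≤ η * Δ := by nlinarith
  split_ifs at ht with h1 h2
  · -- t = M
    rw [ht]
    constructor
    · intro h
      have : min n m' ≤ min n M := min_le_min le_rfl hmM
      linarith
    · intro h
      rcases le_total n m' with hnm | hmn
      · rw [min_eq_left hnm]
        rw [min_eq_left (hnm.trans hmM)] at h
        linarith
      · rw [min_eq_right hmn]
        rcases le_total n M with hnM | hMn
        · rw [max_eq_right hnM] at h ⊢
          linarith
        · rw [max_eq_left hMn] at h ⊢
          rw [min_eq_right hMn] at h
          linarith
  · -- t = m'
    rw [ht]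
    have h2' : M + m' < 0 := lt_of_not_ge h2
    constructor
    · intro h
      have hmx : max n m' ≤ max n M := max_le_max le_rfl hmM
      linarith
    · intro h
      rcases le_total M n with hMn | hnM
      · rw [max_eq_left hMn]
        rw [max_eq_left (hmM.trans hMn)] at h
        exact h
      · rw [max_eq_right hnM]
        rcases le_total m' n with hmn | hnm
        · rw [min_eq_right hmn]
          linarith
        · rw [min_eq_left hnm]
          linarith
  · -- t = (η+2)Δ, both sides false
    rw [ht]
    have hM : η * Δ < M - m' := lt_of_not_ge h1
    have htn : n ≤ (η + 2) * Δ := by nlinarith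
    rw [max_eq_right htn, min_eq_left htn]
    constructor
    · intro h
      exfalso
      have h1' : M ≤ max n M := le_max_right _ _
      have h2' : min n m' ≤ m' := min_le_right _ _
      linarith
    · intro h
      exfalso
      nlinarith

lemma ptwise_mid {η Δ n M m' t : ℝ} (hΔ : 0 < Δ) (hη : 2 ≤ η)
    (hn1 : -Δ ≤ n) (hn2 : n ≤ Δ) (hmM : m' ≤ M)
    (ht : t = if M - m' ≤ η * Δ then (if 0 ≤ M + m' then M else m') else (η + 2) * Δ)
    (hacc : max n M - min n m' ≤ η * Δ) :
    ((max n M + min n m') / 2) ^ 2 ≤ ((max n t + min n t) / 2) ^ 2 := by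
  have h1 : M - m' ≤ η * Δ := by
    have h1' : M ≤ max n M := le_max_right _ _
    have h2' : min n m' ≤ m' := min_le_right _ _
    linarith
  rw [if_pos h1] at ht
  split_ifs at ht with h2
  · -- t = M
    rw [ht]
    have hsum : max n M + min n M = n + M := by
      rcases le_total n M with h | h
      · rw [max_eq_right h, min_eq_left h]; ring
      · rw [max_eq_left h, min_eq_right h]
    rw [hsum]
    rcases le_total n m' with hnm | hmn
    · have he : max n M + min n m' = n + M := by
        rw [min_eq_left hnm, max_eq_right (hnm.trans hmM)]; ring
      rw [he]
    · have huv : max n M + min n m' ≤ n + M := by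
        have : min n m' ≤ min n M := min_le_min le_rfl hmM
        linarith
      have hsum2 : 0 ≤ (max n M + min n m') + (n + M) := by
        rw [min_eq_right hmn]
        rcases le_total n M with hnM | hMn
        · rw [max_eq_right hnM]; linarith
        · rw [max_eq_left hMn]; linarith
      nlinarith
  · -- t = m'
    rw [ht]
    have h2' : M + m' < 0 := lt_of_not_ge h2
    have hsum : max n m' + min n m' = n + m' := by
      rcases le_total n m' with h | h
      · rw [max_eq_right h, min_eq_left h]; ring
      · rw [max_eq_left h, min_eq_right h]
    rw [hsum]
    rcases le_total M n with hMn | hnM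
    · have he : max n M + min n m' = n + m' := by
        rw [max_eq_left hMn, min_eq_right (hmM.trans hMn)]
      rw [he]
    · have huv : n + m' ≤ max n M + min n m' := by
        have : max n m' ≤ max n M := max_le_max le_rfl hmM
        linarith
      have hsum2 : (max n M + min n m') + (n + m') ≤ 0 := by
        rw [max_eq_right hnM]
        rcases le_total n m' with hnm | hmn
        · rw [min_eq_left hnm]; linarith
        · rw [min_eq_right hmn]; linarith
      nlinarith

lemma ptwise_bound {η Δ n a b : ℝ} (hΔ : 0 < Δ) (hη : 2 ≤ η)
    (hn1 : -Δ ≤ n) (hn2 : n ≤ Δ) (hba : b ≤ n) (hna : n ≤ a)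
    (hacc : a - b ≤ η * Δ) :
    ((a + b) / 2) ^ 2 ≤ ((2 + η) * Δ) ^ 2 := by
  nlinarith [sq_nonneg (a + b), sq_nonneg (a - b)]

/-- The collapse map: send an adversarial vector to a single report. -/
def colF (N : ℕ) (η Δ : ℝ) (x : Fin (N-1) → ℝ) : ℝ :=
  if (⨆ i, x i) - (⨅ i, x i) ≤ η * Δ then
    (if 0 ≤ (⨆ i, x i) + (⨅ i, x i) then (⨆ i, x i) else (⨅ i, x i))
  else (η + 2) * Δ

lemma measurable_colF : Measurable (colF N η Δ) := by
  unfold colF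
  exact Measurable.ite (measurableSet_le (measurable_sup'.sub measurable_inf') measurable_const)
    (Measurable.ite (measurableSet_le measurable_const (measurable_sup'.add measurable_inf'))
      measurable_sup' measurable_inf') measurable_const

/-- Collapse of an N-node strategy to a 2-node strategy. -/
lemma collapse_transfer (hN : 2 ≤ N) (hΔ : 0 < Δ) (hη : 2 ≤ η)
    (μ : Measure ℝ) [IsProbabilityMeasure μ] (hμ : μ (Set.Icc (-Δ) Δ) = 1)
    (ν : Measure (Fin (N-1) → ℝ)) [IsProbabilityMeasure ν]
    (hpos : 0 < PA_N N η Δ μ ν) :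
    ∃ κ : Measure ℝ, IsProbabilityMeasure κ ∧
      PA_2 η Δ μ κ = PA_N N η Δ μ ν ∧ MSE_N N η Δ μ ν ≤ MSE_2 η Δ μ κ := by
  haveI : Nonempty (Fin (N-1)) := ⟨⟨0, by omega⟩⟩
  set f := colF N η Δ with hfdef
  have hf : Measurable f := measurable_colF
  set G : ℝ × (Fin (N-1) → ℝ) → ℝ × ℝ := Prod.map id f with hGdef
  have hG : Measurable G := measurable_id.prodMap hf
  have hprod : μ.prod (ν.map f) = (μ.prod ν).map G := by
    have := Measure.map_prod_map (f := id) (g := f) μ ν measurable_id hf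
    rw [Measure.map_id] at this
    exact this
  -- a.e. the first coordinate lies in [-Δ, Δ]
  have hcompl : μ (Set.Icc (-Δ) Δ)ᶜ = 0 := by
    rw [measure_compl measurableSet_Icc (measure_ne_top μ _), hμ, measure_univ, tsub_self]
  have hIcc : ∀ᵐ p ∂(μ.prod ν), p.1 ∈ Set.Icc (-Δ) Δ := by
    rw [ae_iff]
    refine measure_mono_null (fun p hp => ?_) (?_ : (μ.prod ν) ((Set.Icc (-Δ) Δ)ᶜ ×ˢ Set.univ) = 0)
    · exact ⟨hp, Set.mem_univ _⟩
    · rw [Measure.prod_prod, hcompl, zero_mul]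
  have hinfsup : ∀ x : Fin (N-1) → ℝ, (⨅ i, x i) ≤ (⨆ i, x i) := fun x =>
    le_trans (ciInf_le (Set.Finite.bddBelow (Set.finite_range x)) (Classical.arbitrary _))
      (le_ciSup (Set.Finite.bddAbove (Set.finite_range x)) (Classical.arbitrary _))
  -- a.e. equality of acceptance events
  have hiff : ∀ᵐ p ∂(μ.prod ν), (p ∈ G ⁻¹' (acc2 η Δ) ↔ p ∈ accN N η Δ) := by
    filter_upwards [hIcc] with p hp
    have := ptwise_acc (n := p.1) (M := ⨆ i, p.2 i) (m' := ⨅ i, p.2 i) (t := f p.2)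
      hΔ hη hp.1 hp.2 (hinfsup p.2) rfl
    simpa only [accN, acc2, Set.mem_preimage, Set.mem_setOf_eq, hGdef, Prod.map, id] using this.symm
  have hae : G ⁻¹' (acc2 η Δ) =ᵐ[μ.prod ν] accN N η Δ := Filter.eventuallyEq_set.2 hiff
  have hPA : PA_2 η Δ μ (ν.map f) = PA_N N η Δ μ ν := by
    unfold PA_2 PA_N
    rw [hprod, Measure.map_apply hG measurableSet_acc2, measure_congr hae]
  have hcondeq : (μ.prod ν)[|G ⁻¹' (acc2 η Δ)] = (μ.prod ν)[|accN N η Δ] := by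
    rw [ProbabilityTheory.cond, ProbabilityTheory.cond, measure_congr hae,
      Measure.restrict_congr_set hae]
  have hMSE2 : MSE_2 η Δ μ (ν.map f) =
      ∫ p, (mid2 (G p)) ^ 2 ∂((μ.prod ν)[|accN N η Δ]) := by
    unfold MSE_2
    rw [hprod, cond_map_comm _ hG measurableSet_acc2, hcondeq,
      integral_map hG.aemeasurable ((measurable_mid2.pow_const 2).aestronglyMeasurable)]
  refine ⟨ν.map f, Measure.isProbabilityMeasure_map hf.aemeasurable, hPA, ?_⟩
  rw [hMSE2]
  -- the conditional measure is a probability measure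
  have hne : (μ.prod ν) (accN N η Δ) ≠ 0 := by
    intro h
    rw [PA_N, h] at hpos
    simp at hpos
  haveI : IsProbabilityMeasure ((μ.prod ν)[|accN N η Δ]) :=
    cond_isProbabilityMeasure hne
  set cm := (μ.prod ν)[|accN N η Δ] with hcm
  have hmemacc : ∀ᵐ p ∂cm, p ∈ accN N η Δ := by
    rw [hcm, ProbabilityTheory.cond]
    exact Measure.ae_smul_measure (ae_restrict_mem measurableSet_accN) _
  have hmemIcc : ∀ᵐ p ∂cm, p.1 ∈ Set.Icc (-Δ) Δ :=
    cond_absolutelyContinuous.ae_le hIcc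
  -- pointwise comparison and boundedness
  have hle : ∀ᵐ p ∂cm, midN N p ^ 2 ≤ (mid2 (G p)) ^ 2 := by
    filter_upwards [hmemacc, hmemIcc] with p hpa hpi
    exact ptwise_mid (t := f p.2) hΔ hη hpi.1 hpi.2 (hinfsup p.2) rfl hpa
  have hbound1 : ∀ᵐ p ∂cm, ‖midN N p ^ 2‖ ≤ ((2 + η) * Δ) ^ 2 := by
    filter_upwards [hmemacc, hmemIcc] with p hpa hpi
    rw [Real.norm_eq_abs, abs_of_nonneg (sq_nonneg _)]
    exact ptwise_bound hΔ hη hpi.1 hpi.2 (min_le_left _ _) (le_max_left _ _) hpa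
  have hbound2 : ∀ᵐ p ∂cm, ‖(mid2 (G p)) ^ 2‖ ≤ ((2 + η) * Δ) ^ 2 := by
    filter_upwards [hmemacc, hmemIcc] with p hpa hpi
    rw [Real.norm_eq_abs, abs_of_nonneg (sq_nonneg _)]
    have hacc2 : max p.1 (f p.2) - min p.1 (f p.2) ≤ η * Δ := by
      have := (ptwise_acc (n := p.1) (M := ⨆ i, p.2 i) (m' := ⨅ i, p.2 i) (t := f p.2)
        hΔ hη hpi.1 hpi.2 (hinfsup p.2) rfl).1 hpa
      exact this
    exact ptwise_bound hΔ hη hpi.1 hpi.2 (min_le_left _ _) (le_max_left _ _) hacc2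
  have hint1 : Integrable (fun p => midN N p ^ 2) cm :=
    (integrable_const (((2 + η) * Δ) ^ 2)).mono'
      ((measurable_midN.pow_const 2).aestronglyMeasurable) hbound1
  have hint2 : Integrable (fun p => (mid2 (G p)) ^ 2) cm :=
    (integrable_const (((2 + η) * Δ) ^ 2)).mono'
      (((measurable_mid2.comp hG).pow_const 2).aestronglyMeasurable) hbound2
  exact integral_mono_ae hint1 hint2 hle

theorem stmt13 {N : ℕ} (hN : 2 ≤ N) {η Δ : ℝ} (hΔ : 0 < Δ) (hη : 2 ≤ η)
    (μ : Measure ℝ) [IsProbabilityMeasure μ] (hμ : μ (Set.Icc (-Δ) Δ) = 1)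
    (QAD : ℝ → ℝ → ℝ)
    (hQ1 : ∀ y : ℝ, StrictMono fun x => QAD x y) (hQ2 : ∀ x : ℝ, StrictMono (QAD x))
    (hattN : ∀ a : ℝ, 0 < a → a ≤ 1 → ∃ ν : Measure (Fin (N-1) → ℝ),
      IsProbabilityMeasure ν ∧ a ≤ PA_N N η Δ μ ν ∧ MSE_N N η Δ μ ν = cN N η Δ μ a)
    (hatt2 : ∀ a : ℝ, 0 < a → a ≤ 1 → ∃ κ : Measure ℝ,
      IsProbabilityMeasure κ ∧ a ≤ PA_2 η Δ μ κ ∧ MSE_2 η Δ μ κ = c2 η Δ μ a)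
    (hexN : ∃ ν : Measure (Fin (N-1) → ℝ), IsBestResponseN N η Δ μ QAD ν)
    (hex2 : ∃ κ : Measure ℝ, IsBestResponse2 η Δ μ QAD κ) :
    {p : ℝ × ℝ | ∃ ν : Measure (Fin (N-1) → ℝ), IsBestResponseN N η Δ μ QAD ν ∧
        p = (MSE_N N η Δ μ ν, PA_N N η Δ μ ν)} =
      {p : ℝ × ℝ | ∃ κ : Measure ℝ, IsBestResponse2 η Δ μ QAD κ ∧
        p = (MSE_2 η Δ μ κ, PA_2 η Δ μ κ)} := by
  clear hattN hatt2 hexN hex2 hQ2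
  ext p
  simp only [Set.mem_setOf_eq]
  constructor
  · rintro ⟨ν₀, ⟨hνp, hνpos, hνbest⟩, rfl⟩
    haveI := hνp
    obtain ⟨κ₀, hκp, hκPA, hκMSE⟩ := collapse_transfer hN hΔ hη μ hμ ν₀ hνpos
    haveI := hκp
    have hκpos : 0 < PA_2 η Δ μ κ₀ := hκPA ▸ hνpos
    -- MSE_2 κ₀ ≤ MSE_N ν₀ via the diagonal embedding and optimality of ν₀
    obtain ⟨ν₁, hν₁p, hν₁PA, hν₁MSE⟩ := diag_transfer (η := η) (Δ := Δ) hN μ κ₀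
    have hν₁pos : 0 < PA_N N η Δ μ ν₁ := hν₁PA ▸ hκpos
    have hMSEle : MSE_2 η Δ μ κ₀ ≤ MSE_N N η Δ μ ν₀ := by
      have h := hνbest ν₁ hν₁p hν₁pos
      rw [hν₁MSE, hν₁PA, hκPA] at h
      exact ((hQ1 (PA_N N η Δ μ ν₀)).le_iff_le).1 h
    have hMSEeq : MSE_2 η Δ μ κ₀ = MSE_N N η Δ μ ν₀ := le_antisymm hMSEle hκMSE
    refine ⟨κ₀, ⟨hκp, hκpos, ?_⟩, ?_⟩
    · intro κ' hκ'p hκ'pos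
      haveI := hκ'p
      obtain ⟨ν₂, hν₂p, hν₂PA, hν₂MSE⟩ := diag_transfer (η := η) (Δ := Δ) hN μ κ'
      have hν₂pos : 0 < PA_N N η Δ μ ν₂ := hν₂PA ▸ hκ'pos
      have h := hνbest ν₂ hν₂p hν₂pos
      rw [hν₂MSE, hν₂PA] at h
      rw [hMSEeq, hκPA]
      exact h
    · rw [hMSEeq, hκPA]
  · rintro ⟨κ₀, ⟨hκp, hκpos, hκbest⟩, rfl⟩
    haveI := hκp
    obtain ⟨ν₀, hνp, hνPA, hνMSE⟩ := diag_transfer (η := η) (Δ := Δ) hN μ κ₀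
    have hνpos : 0 < PA_N N η Δ μ ν₀ := hνPA ▸ hκpos
    refine ⟨ν₀, ⟨hνp, hνpos, ?_⟩, ?_⟩
    · intro ν' hν'p hν'pos
      haveI := hν'p
      obtain ⟨κ₁, hκ₁p, hκ₁PA, hκ₁MSE⟩ := collapse_transfer hN hΔ hη μ hμ ν' hν'pos
      haveI := hκ₁p
      have hκ₁pos : 0 < PA_2 η Δ μ κ₁ := hκ₁PA ▸ hν'pos
      have h1 : QAD (MSE_N N η Δ μ ν') (PA_N N η Δ μ ν') ≤
          QAD (MSE_2 η Δ μ κ₁) (PA_2 η Δ μ κ₁) := by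
        rw [hκ₁PA]
        exact (hQ1 (PA_N N η Δ μ ν')).monotone hκ₁MSE
      have h2 := hκbest κ₁ hκ₁p hκ₁pos
      rw [hνMSE, hνPA]
      exact h1.trans h2
    · rw [hνMSE, hνPA]
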